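/- Let H, K be Hilbert spaces, t ∈ ℝ, d ∈ H, and D ∈ B(H; K). The block operator T = [[t, ⟨d|], [|d⟩, D*D − I_H]] on ℂ ⊕ H is negative (T ≤ 0) if and only if D is a contraction, t ≤ 0, and there exists e ∈ H with d = (I_H − D*D)^{1/2} e and ‖e‖² ≤ −t. -/

import Mathlib

open ContinuousLinearMap RCLike
open scoped ComplexConjugate

lemma aux_douglas {H : Type*} [NormedAddCommGroup H] [InnerProductSpace ℂ H] [CompleteSpace H]
    (S : H →L[ℂ] H) (hS : IsSelfAdjoint S) (d : H) (c : ℝ) (hc : 0 ≤ c)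
    (hbound : ∀ h : H, ‖(inner ℂ d h : ℂ)‖ ≤ c * ‖S h‖) :
    ∃ e : H, S e = d ∧ ‖e‖ ≤ c := by
  set Sl : H →ₗ[ℂ] H := S.toLinearMap with hSl
  set φ : H →ₗ[ℂ] ℂ := (innerSL ℂ d).toLinearMap with hφ
  have hker : LinearMap.ker Sl ≤ LinearMap.ker φ := by
    intro x hx
    have hx' : S x = 0 := hx
    have := hbound x
    rw [hx', norm_zero, mul_zero] at this
    simpa [φ] using norm_le_zero_iff.mp this
  set φq : (H ⧸ LinearMap.ker Sl) →ₗ[ℂ] ℂ := (LinearMap.ker Sl).liftQ φ hker with hφq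
  set eqv := Sl.quotKerEquivRange with heqv
  set ψlin : LinearMap.range Sl →ₗ[ℂ] ℂ := φq ∘ₗ eqv.symm.toLinearMap with hψlin
  have hψval : ∀ (h : H), ψlin ⟨S h, LinearMap.mem_range_self Sl h⟩ = (inner ℂ d h : ℂ) := by
    intro h
    have h1 : eqv.symm ⟨Sl h, LinearMap.mem_range_self Sl h⟩ = (LinearMap.ker Sl).mkQ h :=
      Sl.quotKerEquivRange_symm_apply_image h (LinearMap.mem_range_self Sl h)
    simp only [ψlin, LinearMap.comp_apply, LinearEquiv.coe_toLinearMap]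
    rw [show (⟨S h, LinearMap.mem_range_self Sl h⟩ : LinearMap.range Sl)
        = ⟨Sl h, LinearMap.mem_range_self Sl h⟩ from rfl, h1]
    simp [φq, φ]
  have hbd : ∀ x : LinearMap.range Sl, ‖ψlin x‖ ≤ c * ‖x‖ := by
    rintro ⟨-, h, rfl⟩
    show ‖ψlin ⟨S h, LinearMap.mem_range_self Sl h⟩‖ ≤ c * ‖S h‖
    rw [hψval h]
    exact hbound h
  set ψ : LinearMap.range Sl →L[ℂ] ℂ := ψlin.mkContinuous c hbd with hψ
  obtain ⟨g, hg, hgn⟩ := exists_extension_norm_eq (LinearMap.range Sl) ψ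
  set e := (InnerProductSpace.toDual ℂ H).symm g with he
  refine ⟨e, ?_, ?_⟩
  · apply ext_inner_right ℂ
    intro v
    have h1 : (inner ℂ (S e) v : ℂ) = inner ℂ e (S v) := by
      conv_lhs => rw [← hS.adjoint_eq]
      exact ContinuousLinearMap.adjoint_inner_left S v e
    rw [h1]
    have h2 : (inner ℂ e (S v) : ℂ) = g (S v) := InnerProductSpace.toDual_symm_apply
    rw [h2]
    have h3 : g (S v) = ψ ⟨S v, LinearMap.mem_range_self Sl v⟩ :=
      hg ⟨S v, LinearMap.mem_range_self Sl v⟩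
    rw [h3]
    have h4 : ψ ⟨S v, LinearMap.mem_range_self Sl v⟩ = (inner ℂ d v : ℂ) := hψval v
    rw [h4]
  · have : ‖e‖ = ‖g‖ := (InnerProductSpace.toDual ℂ H).symm.norm_map g
    rw [this, hgn]
    exact ψlin.mkContinuous_norm_le hc hbd
theorem stmt_6 {H K : Type*}
    [NormedAddCommGroup H] [InnerProductSpace ℂ H] [CompleteSpace H]
    [NormedAddCommGroup K] [InnerProductSpace ℂ K] [CompleteSpace K]
    (t : ℝ) (d : H) (D : H →L[ℂ] K)
    (S : H →L[ℂ] H) (hSpos : S.IsPositive)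
    (hSsq : S ∘L S = 1 - ContinuousLinearMap.adjoint D ∘L D)
    (T : WithLp 2 (ℂ × H) →L[ℂ] WithLp 2 (ℂ × H))
    (hT : ∀ (z : ℂ) (h : H),
      T ((WithLp.equiv 2 (ℂ × H)).symm (z, h))
        = (WithLp.equiv 2 (ℂ × H)).symm
            ((t : ℂ) * z + (inner ℂ d h : ℂ),
             z • d + ContinuousLinearMap.adjoint D (D h) - h)) :
    (-T).IsPositive ↔
      (‖D‖ ≤ 1 ∧ t ≤ 0 ∧ ∃ e : H, d = S e ∧ ‖e‖ ^ 2 ≤ -t) := by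
  have hSelf : IsSelfAdjoint S := hSpos.isSelfAdjoint
  have hSnorm : ∀ h : H, ‖S h‖ ^ 2 = ‖h‖ ^ 2 - ‖D h‖ ^ 2 := by
    intro h
    have h1 : (inner ℂ (S h) (S h) : ℂ) = inner ℂ h h - inner ℂ (D h) (D h) := by
      have e1 : (inner ℂ ((ContinuousLinearMap.adjoint S) h) (S h) : ℂ) = inner ℂ h (S (S h)) :=
        ContinuousLinearMap.adjoint_inner_left S (S h) h
      rw [hSelf.adjoint_eq] at e1
      rw [e1, show S (S h) = (S ∘L S) h from rfl, hSsq]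
      simp only [ContinuousLinearMap.sub_apply, ContinuousLinearMap.one_apply,
        ContinuousLinearMap.comp_apply, inner_sub_right]
      rw [ContinuousLinearMap.adjoint_inner_right]
    rw [inner_self_eq_norm_sq_to_K, inner_self_eq_norm_sq_to_K,
      inner_self_eq_norm_sq_to_K] at h1
    exact_mod_cast h1
  have hQ : ∀ (z : ℂ) (h : H),
      (inner ℂ (T ((WithLp.equiv 2 (ℂ × H)).symm (z, h)))
        ((WithLp.equiv 2 (ℂ × H)).symm (z, h)) : ℂ)
      = ((t * ‖z‖ ^ 2 + 2 * (z * (inner ℂ h d : ℂ)).re + ‖D h‖ ^ 2 - ‖h‖ ^ 2 : ℝ) : ℂ) := by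
    intro z h
    rw [hT, WithLp.prod_inner_apply]
    simp only [WithLp.equiv_symm_apply, WithLp.toLp_fst, WithLp.toLp_snd]
    rw [RCLike.inner_apply, inner_sub_left, inner_add_left, inner_smul_left,
      ContinuousLinearMap.adjoint_inner_left, inner_self_eq_norm_sq_to_K,
      inner_self_eq_norm_sq_to_K]
    set a : ℂ := inner ℂ h d with ha
    rw [show (inner ℂ d h : ℂ) = (starRingEnd ℂ) a from (inner_conj_symm d h).symm]
    rw [map_add, map_mul, Complex.conj_conj, Complex.conj_ofReal]
    have e1 : (starRingEnd ℂ) z * z = ((‖z‖ : ℂ)) ^ 2 := RCLike.conj_mul z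
    have e2 : z * a + (starRingEnd ℂ) z * (starRingEnd ℂ) a = 2 * (((z * a).re : ℝ) : ℂ) := by
      rw [← map_mul]
      exact RCLike.add_conj (z * a)
    push_cast
    linear_combination (norm := (push_cast; ring_nf; norm_num)) (t : ℂ) * e1 + e2
  constructor
  · intro hpos
    have hQle : ∀ (z : ℂ) (h : H),
        t * ‖z‖ ^ 2 + 2 * (z * (inner ℂ h d : ℂ)).re + ‖D h‖ ^ 2 - ‖h‖ ^ 2 ≤ 0 := by
      intro z h
      have h2 := ((ContinuousLinearMap.isPositive_iff_complex _).mp hpos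
        ((WithLp.equiv 2 (ℂ × H)).symm (z, h))).2
      rw [ContinuousLinearMap.neg_apply, inner_neg_left, hQ, ← Complex.ofReal_neg] at h2
      rw [RCLike.re_to_complex, Complex.ofReal_re] at h2
      linarith
    have ht : t ≤ 0 := by
      have := hQle 1 0
      simpa using this
    refine ⟨?_, ht, ?_⟩
    · refine ContinuousLinearMap.opNorm_le_bound D zero_le_one fun h => ?_
      rw [one_mul]
      nlinarith [hSnorm h, sq_nonneg (‖S h‖), norm_nonneg (D h), norm_nonneg h]
    · have hb : ∀ h : H, ‖(inner ℂ d h : ℂ)‖ ≤ Real.sqrt (-t) * ‖S h‖ := by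
        intro h
        rw [norm_inner_symm d h]
        set a : ℂ := (inner ℂ h d : ℂ) with ha
        have key : ‖a‖ ^ 2 ≤ (-t) * ‖S h‖ ^ 2 := by
          rcases ht.lt_or_eq with hneg | h0
          · have hu : (0:ℝ) < -t := neg_pos.mpr hneg
            have hq := hQle ((((-t)⁻¹ : ℝ) : ℂ) * (starRingEnd ℂ) a) h
            have e1 : ‖((((-t)⁻¹ : ℝ)) : ℂ) * (starRingEnd ℂ) a‖ = (-t)⁻¹ * ‖a‖ := by
              rw [norm_mul, Complex.norm_real, RCLike.norm_conj, Real.norm_eq_abs,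
                abs_of_pos (by positivity)]
            have e2 : ((((-t)⁻¹ : ℝ)) : ℂ) * (starRingEnd ℂ) a * a
                = ((((-t)⁻¹ * ‖a‖ ^ 2 : ℝ)) : ℂ) := by
              rw [mul_assoc, mul_comm ((starRingEnd ℂ) a) a, Complex.mul_conj,
                ← Complex.ofReal_mul, Complex.normSq_eq_norm_sq]
            rw [e1, e2, Complex.ofReal_re] at hq
            have hid : (-t) * (-t)⁻¹ = 1 := mul_inv_cancel₀ hu.ne'
            have h4 : t * ((-t)⁻¹ * ‖a‖) ^ 2 = -((-t)⁻¹ * ‖a‖ ^ 2) := by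
              linear_combination (-((-t)⁻¹ * ‖a‖ ^ 2)) * hid
            have h3 : (-t)⁻¹ * ‖a‖ ^ 2 ≤ ‖S h‖ ^ 2 := by
              have := hSnorm h
              linarith
            have h5 : ‖a‖ ^ 2 = (-t) * ((-t)⁻¹ * ‖a‖ ^ 2) := by
              rw [← mul_assoc, hid, one_mul]
            rw [h5]
            exact mul_le_mul_of_nonneg_left h3 hu.le
          · have hA : a = 0 := by
              by_contra hA
              have hA' : (0:ℝ) < ‖a‖ := norm_pos_iff.mpr hA
              set r : ℝ := (‖S h‖ ^ 2 + 1) / (2 * ‖a‖ ^ 2) with hr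
              have hq := hQle (((r : ℝ) : ℂ) * (starRingEnd ℂ) a) h
              have hna : ‖a‖ ≠ 0 := ne_of_gt hA'
              have e2 : ((r : ℝ) : ℂ) * (starRingEnd ℂ) a * a = (((r * ‖a‖ ^ 2 : ℝ)) : ℂ) := by
                rw [mul_assoc, mul_comm ((starRingEnd ℂ) a) a, Complex.mul_conj,
                  ← Complex.ofReal_mul, Complex.normSq_eq_norm_sq]
              rw [e2, Complex.ofReal_re, ← h0] at hq
              have hrv : r * ‖a‖ ^ 2 = (‖S h‖ ^ 2 + 1) / 2 := by
                have hc : ‖a‖ ≠ 0 := hna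
                rw [hr]
                field_simp [hc]
              have := hSnorm h
              rw [hrv, h0] at hq
              nlinarith
            simp [hA, h0]
        have hsq := Real.sqrt_le_sqrt key
        rw [Real.sqrt_sq (norm_nonneg a), Real.sqrt_mul (by linarith) _,
          Real.sqrt_sq (norm_nonneg _)] at hsq
        exact hsq
      obtain ⟨e, hse, hne⟩ := aux_douglas S hSelf d (Real.sqrt (-t)) (Real.sqrt_nonneg _) hb
      refine ⟨e, hse.symm, ?_⟩
      nlinarith [hne, Real.sq_sqrt (neg_nonneg.mpr ht), Real.sqrt_nonneg (-t), norm_nonneg e]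
  · rintro ⟨hD, ht, e, hd, he⟩
    subst hd
    rw [ContinuousLinearMap.isPositive_iff_complex]
    intro x
    rw [show x = (WithLp.equiv 2 (ℂ × H)).symm
        ((WithLp.equiv 2 (ℂ × H) x).1, (WithLp.equiv 2 (ℂ × H) x).2) from rfl]
    set z := (WithLp.equiv 2 (ℂ × H) x).1
    set h := (WithLp.equiv 2 (ℂ × H) x).2
    rw [ContinuousLinearMap.neg_apply, inner_neg_left, hQ, ← Complex.ofReal_neg]
    constructor
    · rw [RCLike.re_to_complex, Complex.ofReal_re]
    · rw [RCLike.re_to_complex, Complex.ofReal_re]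
      have hre : (z * (inner ℂ h (S e) : ℂ)).re ≤ ‖S h‖ * (‖z‖ * ‖e‖) := by
        have e1 : (inner ℂ h (S e) : ℂ) = inner ℂ (S h) e := by
          have h1 := ContinuousLinearMap.adjoint_inner_left S e h
          rw [hSelf.adjoint_eq] at h1
          exact h1.symm
        rw [e1, show z * (inner ℂ (S h) e : ℂ) = inner ℂ (S h) (z • e) from
          (inner_smul_right _ _ _).symm]
        have h6 := re_inner_le_norm (𝕜 := ℂ) (S h) (z • e)
        rw [RCLike.re_to_complex] at h6
        rw [norm_smul] at h6
        exact h6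
      have hS2 := hSnorm h
      have hze : ‖z‖ ^ 2 * ‖e‖ ^ 2 ≤ ‖z‖ ^ 2 * (-t) := mul_le_mul_of_nonneg_left he (sq_nonneg _)
      nlinarith [hre, hS2, hze, sq_nonneg (‖S h‖ - ‖z‖ * ‖e‖),
        norm_nonneg (S h), norm_nonneg z, norm_nonneg e]
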